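/- Let K be a max cone in ℝ≥0^n generated by S, and let u ∈ S with u ≠ 0. Then the following are equivalent: (1) u is an extremal in K; (2) for some j ∈ supp(u), u(j) is minimal in K(j); (3) for some j ∈ supp(u), u(j) is minimal in S(j). -/

import Mathlib

open scoped NNReal

/-- The max-algebraic span of `S`: all vectors `⨆_{x ∈ S} λ_x • x` where only
finitely many coefficients `λ_x` are nonzero (`MaxSpan ∅ = {0}`). -/
def MaxSpan {n : ℕ} (S : Set (Fin n → ℝ≥0)) : Set (Fin n → ℝ≥0) :=
  {u | ∃ (F : Finset (Fin n → ℝ≥0)) (lam : (Fin n → ℝ≥0) → ℝ≥0),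
    ↑F ⊆ S ∧ u = F.sup (fun x => lam x • x)}

/-- A max cone: a subset of `ℝ≥0ⁿ` closed under pointwise max `⊔` and under
multiplication by nonnegative scalars. -/
def MaxCone {n : ℕ} (K : Set (Fin n → ℝ≥0)) : Prop :=
  0 ∈ K ∧ (∀ x ∈ K, ∀ y ∈ K, x ⊔ y ∈ K) ∧ (∀ (c : ℝ≥0), ∀ x ∈ K, c • x ∈ K)

/-- `u` is an extremal in `K` if `u = v ⊔ w` with `v, w ∈ K` implies `u = v` or `u = w`. -/
def IsExtremal {n : ℕ} (K : Set (Fin n → ℝ≥0)) (u : Fin n → ℝ≥0) : Prop :=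
  u ∈ K ∧ ∀ v ∈ K, ∀ w ∈ K, u = v ⊔ w → u = v ∨ u = w

/-- A vector is scaled if its max norm `⨆ i, x i` equals `1`. -/
def Scaled {n : ℕ} (x : Fin n → ℝ≥0) : Prop := (⨆ i, x i) = 1

/-- The support of a vector. -/
def supp {n : ℕ} (v : Fin n → ℝ≥0) : Set (Fin n) := {j | 0 < v j}

/-- For `j ∈ supp u`, `rescale u j = (1 / u j) • u`, the `j`-scaling `u(j)`. -/
noncomputable def rescale {n : ℕ} (u : Fin n → ℝ≥0) (j : Fin n) : Fin n → ℝ≥0 :=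
  (u j)⁻¹ • u

/-- `T(j) = {u(j) : u ∈ T, j ∈ supp u}`. -/
noncomputable def setScale {n : ℕ} (T : Set (Fin n → ℝ≥0)) (j : Fin n) :
    Set (Fin n → ℝ≥0) :=
  {y | ∃ u ∈ T, j ∈ supp u ∧ y = rescale u j}

/-- `u` is minimal in `T` if `v ∈ T` and `v ≤ u` imply `v = u`. -/
def MinimalIn {n : ℕ} (T : Set (Fin n → ℝ≥0)) (u : Fin n → ℝ≥0) : Prop :=
  u ∈ T ∧ ∀ v ∈ T, v ≤ u → v = u

/-- A set is totally dependent if each of its elements is a max combination of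
the remaining ones. -/
def TotallyDependent {n : ℕ} (S : Set (Fin n → ℝ≥0)) : Prop :=
  ∀ x ∈ S, x ∈ MaxSpan (S \ {x})

/-- A set is independent if none of its elements is a max combination of
the remaining ones. -/
def IndependentSet {n : ℕ} (S : Set (Fin n → ℝ≥0)) : Prop :=
  ∀ x ∈ S, x ∉ MaxSpan (S \ {x})

/-- A basis for `K` is an independent set of generators for `K`. -/
def IsBasis {n : ℕ} (S K : Set (Fin n → ℝ≥0)) : Prop :=
  IndependentSet S ∧ MaxSpan S = K

/-- for a max cone `K` generated by `S` and a nonzero `u ∈ S`,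
the following are equivalent: (1) `u` is extremal in `K`;
(2) `u(j)` is minimal in `K(j)` for some `j ∈ supp u`;
(3) `u(j)` is minimal in `S(j)` for some `j ∈ supp u`. -/
lemma mem_maxSpan_self {n : ℕ} {S : Set (Fin n → ℝ≥0)} {x : Fin n → ℝ≥0}
    (hx : x ∈ S) : x ∈ MaxSpan S := by
  classical
  refine ⟨{x}, fun _ => 1, by simpa using hx, ?_⟩
  rw [Finset.sup_singleton]
  funext k
  exact (one_mul (x k)).symm

lemma finset_sup_mem {n : ℕ} {K : Set (Fin n → ℝ≥0)} (hK : MaxCone K)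
    {α : Type*} (F : Finset α) (f : α → (Fin n → ℝ≥0))
    (hf : ∀ x ∈ F, f x ∈ K) : F.sup f ∈ K := by
  refine Finset.sup_induction ?_ (fun a ha b hb => hK.2.1 a ha b hb) hf
  exact hK.1

lemma smul_le_smul_pt {n : ℕ} (c : ℝ≥0) {x y : Fin n → ℝ≥0} (h : x ≤ y) :
    c • x ≤ c • y := fun j => mul_le_mul_right (h j) c

lemma smul_rescale {n : ℕ} {u : Fin n → ℝ≥0} {j : Fin n} (hj : 0 < u j) :
    u j • rescale u j = u := by
  funext k
  show u j * ((u j)⁻¹ * u k) = u k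
  rw [← mul_assoc, mul_inv_cancel₀ hj.ne', one_mul]

lemma rescale_apply_self {n : ℕ} {u : Fin n → ℝ≥0} {j : Fin n} (hj : 0 < u j) :
    rescale u j j = 1 := by
  show (u j)⁻¹ * u j = 1
  exact inv_mul_cancel₀ hj.ne'

lemma rescale_le_rescale {n : ℕ} {v u : Fin n → ℝ≥0} {j : Fin n}
    (hvu : v ≤ u) (hvj : v j = u j) (hj : 0 < u j) :
    rescale v j ≤ rescale u j := by
  intro k
  show (v j)⁻¹ * v k ≤ (u j)⁻¹ * u k
  rw [hvj]
  exact mul_le_mul_right (hvu k) _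

lemma extremal_finset_sup {n : ℕ} {K : Set (Fin n → ℝ≥0)} (hK : MaxCone K)
    {u : Fin n → ℝ≥0} (hu : IsExtremal K u) (hu0 : u ≠ 0)
    {α : Type*} (F : Finset α) (f : α → (Fin n → ℝ≥0))
    (hf : ∀ x ∈ F, f x ∈ K) (heq : u = F.sup f) : ∃ x ∈ F, u = f x := by
  classical
  induction F using Finset.induction_on with
  | empty => exact absurd heq (by rw [Finset.sup_empty]; exact hu0)
  | @insert a s hnotmem ih =>
    rw [Finset.sup_insert] at heq
    have hsK : s.sup f ∈ K := finset_sup_mem hK s f (fun x hx => hf x (Finset.mem_insert_of_mem hx))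
    rcases hu.2 (f a) (hf a (Finset.mem_insert_self a s)) (s.sup f) hsK heq with h | h
    · exact ⟨a, Finset.mem_insert_self a s, h⟩
    · obtain ⟨x, hx, hux⟩ := ih (fun x hx => hf x (Finset.mem_insert_of_mem hx)) h
      exact ⟨x, Finset.mem_insert_of_mem hx, hux⟩

/-- If `u(j)` is minimal in `S(j)` then it is minimal in `K(j)` where `K = MaxSpan S`. -/
lemma minimal_span {n : ℕ} {K S : Set (Fin n → ℝ≥0)} (hgen : MaxSpan S = K)
    {u : Fin n → ℝ≥0} (huS : u ∈ S) {j : Fin n} (hj : 0 < u j)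
    (hmin : MinimalIn (setScale S j) (rescale u j)) :
    MinimalIn (setScale K j) (rescale u j) := by
  constructor
  · exact ⟨u, hgen ▸ mem_maxSpan_self huS, hj, rfl⟩
  · rintro y ⟨v, hvK, hvj, rfl⟩ hle
    rw [← hgen] at hvK
    obtain ⟨F, lam, hFS, hv⟩ := hvK
    have hFne : F.Nonempty := by
      rcases F.eq_empty_or_nonempty with h | h
      · exfalso; rw [h] at hv; simp at hv
        rw [hv] at hvj; exact absurd hvj (by simp [supp])
      · exact h
    obtain ⟨x, hxF, hsup⟩ := Finset.exists_mem_eq_sup F hFne (fun x : Fin n → ℝ≥0 => ((lam x • x) j : ℝ≥0))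
    have hvjx : v j = lam x * x j := by
      rw [hv, Finset.sup_apply]; exact hsup
    have hvjpos : 0 < v j := hvj
    have hlx : lam x ≠ 0 := by
      intro h; rw [h, zero_mul] at hvjx; exact absurd hvjx hvjpos.ne'
    have hxj : 0 < x j := by
      rcases eq_or_lt_of_le (zero_le (a := x j)) with h | h
      · rw [← h, mul_zero] at hvjx; exact absurd hvjx hvjpos.ne'
      · exact h
    -- rescale x j ≤ rescale v j
    have hterm : lam x • x ≤ v := by
      rw [hv]; exact Finset.le_sup (f := fun x : Fin n → ℝ≥0 => lam x • x) hxF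
    have hresc : rescale x j ≤ rescale v j := by
      intro k
      show (x j)⁻¹ * x k ≤ (v j)⁻¹ * v k
      have := mul_le_mul_right (hterm k) (v j)⁻¹
      have harith : (lam x)⁻¹ * (x j)⁻¹ * (lam x * x k) =
          ((lam x)⁻¹ * lam x) * ((x j)⁻¹ * x k) := by ring
      calc (x j)⁻¹ * x k = (v j)⁻¹ * (lam x * x k) := by
            rw [hvjx, mul_inv, harith, inv_mul_cancel₀ hlx, one_mul]
        _ ≤ (v j)⁻¹ * v k := this
    have hx_eq : rescale x j = rescale u j :=
      hmin.2 _ ⟨x, hFS hxF, hxj, rfl⟩ (le_trans hresc hle)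
    exact le_antisymm hle (hx_eq ▸ hresc)

theorem stmt5 {n : ℕ} (K S : Set (Fin n → ℝ≥0)) (hK : MaxCone K)
    (hgen : MaxSpan S = K) (u : Fin n → ℝ≥0) (huS : u ∈ S) (hu0 : u ≠ 0) :
    (IsExtremal K u ↔ ∃ j ∈ supp u, MinimalIn (setScale K j) (rescale u j)) ∧
    ((∃ j ∈ supp u, MinimalIn (setScale K j) (rescale u j)) ↔
      ∃ j ∈ supp u, MinimalIn (setScale S j) (rescale u j)) := by
  classical
  have huK : u ∈ K := hgen ▸ mem_maxSpan_self huS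
  -- (2) → (1)
  have min_to_ext : (∃ j ∈ supp u, MinimalIn (setScale K j) (rescale u j)) →
      IsExtremal K u := by
    rintro ⟨j, hj, hmin⟩
    refine ⟨huK, fun v hv w hw huvw => ?_⟩
    have hvu : v ≤ u := huvw ▸ le_sup_left
    have hwu : w ≤ u := huvw ▸ le_sup_right
    have hjmax : u j = v j ⊔ w j := congrFun huvw j
    have hj' : 0 < u j := hj
    rcases le_total (w j) (v j) with hc | hc
    · left
      have hvj : v j = u j := by rw [hjmax]; exact (sup_eq_left.mpr hc).symm
      have hvjpos : 0 < v j := hvj ▸ hj'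
      have : rescale v j = rescale u j :=
        hmin.2 _ ⟨v, hv, hvjpos, rfl⟩ (rescale_le_rescale hvu hvj hj')
      calc u = u j • rescale u j := (smul_rescale hj').symm
        _ = u j • rescale v j := by rw [this]
        _ = v j • rescale v j := by rw [hvj]
        _ = v := smul_rescale hvjpos
    · right
      have hwj : w j = u j := by rw [hjmax]; exact (sup_eq_right.mpr hc).symm
      have hwjpos : 0 < w j := hwj ▸ hj'
      have : rescale w j = rescale u j :=
        hmin.2 _ ⟨w, hw, hwjpos, rfl⟩ (rescale_le_rescale hwu hwj hj')
      calc u = u j • rescale u j := (smul_rescale hj').symm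
        _ = u j • rescale w j := by rw [this]
        _ = w j • rescale w j := by rw [hwj]
        _ = w := smul_rescale hwjpos
  -- (1) → (2)
  have ext_to_min : IsExtremal K u →
      ∃ j ∈ supp u, MinimalIn (setScale K j) (rescale u j) := by
    intro hext
    by_contra hcon
    push_neg at hcon
    have key : ∀ j : Fin n, ∃ w : Fin n → ℝ≥0, 0 < u j →
        w ∈ K ∧ 0 < w j ∧ rescale w j ≤ rescale u j ∧ rescale w j ≠ rescale u j := by
      intro j
      by_cases hj : 0 < u j
      · have hnm := hcon j hj
        have hmem : rescale u j ∈ setScale K j := ⟨u, huK, hj, rfl⟩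
        rw [MinimalIn, not_and] at hnm
        push_neg at hnm
        obtain ⟨y, ⟨w, hwK, hwj, rfl⟩, hle, hne⟩ := hnm hmem
        exact ⟨w, fun _ => ⟨hwK, hwj, hle, hne⟩⟩
      · exact ⟨0, fun h => absurd h hj⟩
    choose w hw using key
    set F : Finset (Fin n) := Finset.univ.filter (fun j => 0 < u j) with hF
    have hFmem : ∀ j, j ∈ F ↔ 0 < u j := by
      intro j; simp [hF]
    set f : Fin n → (Fin n → ℝ≥0) := fun j => u j • rescale (w j) j with hf
    have hfK : ∀ j ∈ F, f j ∈ K := by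
      intro j hj
      exact hK.2.2 (u j) _ (hK.2.2 (w j j)⁻¹ _ ((hw j ((hFmem j).1 hj)).1))
    have hequ : u = F.sup f := by
      apply le_antisymm
      · intro k
        rcases eq_or_lt_of_le (zero_le (a := u k)) with h | h
        · rw [← h]; exact zero_le
        · have hkF : k ∈ F := (hFmem k).2 h
          have : f k k = u k := by
            show u k * rescale (w k) k k = u k
            rw [rescale_apply_self (hw k h).2.1, mul_one]
          calc u k = f k k := this.symm
            _ ≤ (F.sup f) k := by
              rw [Finset.sup_apply]
              exact Finset.le_sup (f := fun a => f a k) hkF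
      · apply Finset.sup_le
        intro j hj
        have hju : 0 < u j := (hFmem j).1 hj
        calc f j = u j • rescale (w j) j := rfl
          _ ≤ u j • rescale u j := smul_le_smul_pt _ (hw j hju).2.2.1
          _ = u := smul_rescale hju
    obtain ⟨j, hjF, hufj⟩ := extremal_finset_sup hK hext hu0 F f hfK hequ
    have hju : 0 < u j := (hFmem j).1 hjF
    have : rescale (w j) j = rescale u j := by
      have h1 : u j • rescale (w j) j = u j • rescale u j := by
        calc u j • rescale (w j) j = f j := rfl
          _ = u := hufj.symm
          _ = u j • rescale u j := (smul_rescale hju).symm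
      funext k
      show (w j j)⁻¹ * w j k = (u j)⁻¹ * u k
      have h2 : u j * ((w j j)⁻¹ * w j k) = u j * ((u j)⁻¹ * u k) := congrFun h1 k
      exact mul_left_cancel₀ hju.ne' h2
    exact (hw j hju).2.2.2 this
  constructor
  · exact ⟨ext_to_min, min_to_ext⟩
  · constructor
    · rintro ⟨j, hj, hmin⟩
      refine ⟨j, hj, ⟨u, huS, hj, rfl⟩, fun y hy hle => hmin.2 y ?_ hle⟩
      obtain ⟨v, hvS, hvj, rfl⟩ := hy
      exact ⟨v, hgen ▸ mem_maxSpan_self hvS, hvj, rfl⟩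
    · rintro ⟨j, hj, hmin⟩
      exact ⟨j, hj, minimal_span hgen huS hj hmin⟩
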